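/- Fix f, g in the open unit disk and a point P ∈ ℂ with |P| < 1, P ≠ f, P ≠ g. For λ on the unit circle let P†(λ) = (conj(P)²·λ − conj(P)·(fg + λ(conj f + conj g)) + (f + g + λ·conj(f)·conj(g)) − P)/(1 − |P|²). Then as λ ranges over the unit circle, P†(λ) traces the circle centered at O† = (f + g − f·g·conj(P) − P)/(1 − |P|²) with radius r† = |(conj(g) − conj(P))·(conj(f) − conj(P))| / |1 − |P|²|. -/

import Mathlib

open ComplexConjugate

/-- Locus of the isogonal conjugate over the Poncelet family inscribed in the
unit circle with caustic foci `f, g`: as `λ` traverses the unit circle,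
`P†(λ)` traces the circle centered at `(f + g − fg·conj P − P)/(1 − |P|²)` of
radius `|(conj g − conj P)(conj f − conj P)|/|1 − |P|²|`. -/
theorem isogonal_locus_circle (f g P : ℂ)
    (hf : ‖f‖ < 1) (hg : ‖g‖ < 1) (hP : ‖P‖ < 1)
    (hPf : P ≠ f) (hPg : P ≠ g) :
    {z : ℂ | ∃ l : ℂ, ‖l‖ = 1 ∧
        z = ((conj P) ^ 2 * l - conj P * (f * g + l * (conj f + conj g))
              + (f + g + l * conj f * conj g) - P)
            / ((1 : ℂ) - ((‖P‖ : ℝ) : ℂ) ^ 2)}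
      = Metric.sphere
          ((f + g - f * g * conj P - P) / ((1 : ℂ) - ((‖P‖ : ℝ) : ℂ) ^ 2))
          (‖(conj g - conj P) * (conj f - conj P)‖
            / |1 - (‖P‖) ^ 2|) := by
  set D : ℂ := (1 : ℂ) - ((‖P‖ : ℝ) : ℂ) ^ 2 with hDdef
  set A : ℂ := (conj g - conj P) * (conj f - conj P) with hAdef
  have hP2 : (‖P‖) ^ 2 < 1 := by
    have := norm_nonneg P
    nlinarith
  have hDre : D = ((1 - (‖P‖) ^ 2 : ℝ) : ℂ) := by push_cast [hDdef]; ring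
  have hDabs : ‖D‖ = |1 - (‖P‖) ^ 2| := by
    rw [hDre, Complex.norm_real, Real.norm_eq_abs]
  have hDne : D ≠ 0 := by
    rw [hDre]
    simp only [ne_eq, Complex.ofReal_eq_zero]
    nlinarith
  have hAne : A ≠ 0 := by
    apply mul_ne_zero
    · intro h
      apply hPg
      have : conj g = conj P := by linear_combination h
      have := congrArg conj this
      simpa using this.symm
    · intro h
      apply hPf
      have : conj f = conj P := by linear_combination h
      have := congrArg conj this
      simpa using this.symm
  have hDabsne : ‖D‖ ≠ 0 := by simpa using hDne
  ext z
  simp only [Set.mem_setOf_eq, Metric.mem_sphere, Complex.dist_eq]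
  constructor
  · rintro ⟨l, hl, rfl⟩
    have key : ((conj P) ^ 2 * l - conj P * (f * g + l * (conj f + conj g))
              + (f + g + l * conj f * conj g) - P) / D
        - (f + g - f * g * conj P - P) / D = l * A / D := by
      field_simp
      ring
    rw [key, norm_div, norm_mul, hl, one_mul, hDabs]
  · intro hz
    refine ⟨(z - (f + g - f * g * conj P - P) / D) * D / A, ?_, ?_⟩
    · have hAabsne : ‖A‖ ≠ 0 := by simpa using hAne
      have habsne : |1 - (‖P‖) ^ 2| ≠ 0 := hDabs ▸ hDabsne
      rw [norm_div, norm_mul, hz, hDabs, div_mul_cancel₀ _ habsne, div_self hAabsne]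
    · field_simp
      ring
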